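/- arXiv:1704.03698 — 4 statements merged into one kernel-verified Lean document; each statement's English description precedes it below -/
import Mathlib

section
/- For any control function u : ℝ³ → ℝ that is continuous in all variables and locally Lipschitz in (q,p), and for any t₀ ∈ ℝ, there exists an initial condition (q₀, p₀) with 0 < q₀ < π such that every solution (q(t), p(t)) of the system q̇ = p, ṗ = u(q,p,t)·sin q − cos q with (q(t₀), p(t₀)) = (q₀, p₀) satisfies 0 < q(t) < π for all t ≥ t₀ in its interval of existence (i.e. the pendulum never falls along this solution). -/
/-!
Ważewski's retract argument. On the walls `q = 0` and `q = π` of the strip `0 < q < π` the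
acceleration is `ṗ = ∓1`, pointing out of the strip, so a solution that reaches a wall at its
first exit time crosses it strictly. Hence the initial positions `x ∈ (0, π)` at rest from which
some solution falls through `q = 0`, resp. through `q = π`, form two open sets (continuous
dependence on initial data); they are disjoint by uniqueness, and nonempty because positions close
to a wall fall through it. Since `(0, π)` is connected, some `x` lies in neither set, and then no
solution starting at `(x, 0)` leaves the strip.
-/

open Real Set Metric Function
open scoped NNReal

theorem HasDerivWithinAt.fst {F G : Type*} [NormedAddCommGroup F] [NormedSpace ℝ F]
    [NormedAddCommGroup G] [NormedSpace ℝ G] {f : ℝ → F × G} {f' : F × G} {s : Set ℝ} {t : ℝ}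
    (h : HasDerivWithinAt f f' s t) : HasDerivWithinAt (fun t => (f t).1) f'.1 s t := by
  simpa [comp_def] using (ContinuousLinearMap.fst ℝ F G).hasFDerivAt.comp_hasDerivWithinAt t h

theorem HasDerivWithinAt.snd {F G : Type*} [NormedAddCommGroup F] [NormedSpace ℝ F]
    [NormedAddCommGroup G] [NormedSpace ℝ G] {f : ℝ → F × G} {f' : F × G} {s : Set ℝ} {t : ℝ}
    (h : HasDerivWithinAt f f' s t) : HasDerivWithinAt (fun t => (f t).2) f'.2 s t := by
  simpa [comp_def] using (ContinuousLinearMap.snd ℝ F G).hasFDerivAt.comp_hasDerivWithinAt t h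

theorem exists_first_mem_frontier {α : Type*} [TopologicalSpace α] {φ : ℝ → α} {U : Set α}
    {a b : ℝ} (hab : a ≤ b) (hφ : ContinuousOn φ (Icc a b)) (hU : IsOpen U) (ha : φ a ∈ U)
    (hb : φ b ∉ U) : ∃ T ∈ Ioc a b, φ T ∈ frontier U ∧ ∀ t ∈ Ico a T, φ t ∈ U := by
  set S := Icc a b ∩ φ ⁻¹' Uᶜ
  have hS : IsClosed S := hφ.preimage_isClosed_of_isClosed isClosed_Icc hU.isClosed_compl
  have hSbdd : BddBelow S := ⟨a, fun t ht => ht.1.1⟩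
  obtain ⟨⟨haT, hTb⟩, hTU⟩ := hS.csInf_mem ⟨b, ⟨hab, le_rfl⟩, hb⟩ hSbdd
  have hbefore : ∀ t ∈ Ico a (sInf S), φ t ∈ U := fun t ht => by
    by_contra h
    exact notMem_of_lt_csInf ht.2 hSbdd ⟨⟨ht.1, ht.2.le.trans hTb⟩, h⟩
  have haT' : a < sInf S := haT.lt_of_ne fun h => hTU (h ▸ ha)
  refine ⟨sInf S, ⟨haT', hTb⟩, ?_, hbefore⟩
  rw [hU.frontier_eq]
  refine ⟨((hφ _ ⟨haT, hTb⟩).mono (Icc_subset_Icc le_rfl hTb)).mono Ico_subset_Icc_self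
    |>.mem_closure ?_ hbefore, hTU⟩
  rw [closure_Ico haT'.ne]
  exact right_mem_Icc.2 haT

theorem IsMinOn.hasDerivWithinAt_nonpos {φ : ℝ → ℝ} {φ' a b : ℝ}
    (h : IsMinOn φ (Icc a b) b) (hφ : HasDerivWithinAt φ φ' (Icc a b) b) (hab : a < b) :
    φ' ≤ 0 := by
  have hy : a - b ∈ posTangentConeAt (Icc a b) b :=
    sub_mem_posTangentConeAt_of_segment_subset (by rw [segment_symm, segment_eq_Icc hab.le])
  have := h.localize.hasFDerivWithinAt_nonneg hφ.hasFDerivWithinAt hy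
  simp only [ContinuousLinearMap.toSpanSingleton_apply, smul_eq_mul] at this
  nlinarith [sub_neg.2 hab]

theorem IsMaxOn.hasDerivWithinAt_nonneg {φ : ℝ → ℝ} {φ' a b : ℝ}
    (h : IsMaxOn φ (Icc a b) b) (hφ : HasDerivWithinAt φ φ' (Icc a b) b) (hab : a < b) : 0 ≤ φ' :=
  neg_nonpos.1 (IsMinOn.hasDerivWithinAt_nonpos h.neg hφ.neg hab)

namespace InvertedPendulum

section Solutions

variable {E : Type*} [NormedAddCommGroup E] {W V : ℝ → E → E} {a b c : ℝ} {f g : ℝ → E}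

structure IsLocallyLipschitzField (W : ℝ → E → E) : Prop where
  continuous : Continuous (uncurry W)
  exists_lipschitzOnWith :
    ∀ a b R : ℝ, ∃ K : ℝ≥0, ∀ t ∈ Icc a b, LipschitzOnWith K (W t) (closedBall 0 R)

theorem IsLocallyLipschitzField.neg (hW : IsLocallyLipschitzField W) :
    IsLocallyLipschitzField (fun t z => -W t (-z)) where
  continuous := (hW.continuous.comp (continuous_fst.prodMk continuous_snd.neg)).neg
  exists_lipschitzOnWith a b R := by
    obtain ⟨K, hK⟩ := hW.exists_lipschitzOnWith a b R
    refine ⟨K, fun t ht => LipschitzOnWith.of_dist_le_mul fun z hz w hw => ?_⟩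
    simpa using (hK t ht).dist_le_mul (-z) (by simpa using hz) (-w) (by simpa using hw)

theorem IsLocallyLipschitzField.exists_norm_le [ProperSpace E] (hW : IsLocallyLipschitzField W)
    (a b R : ℝ) : ∃ C, ∀ t ∈ Icc a b, ∀ z ∈ closedBall (0 : E) R, ‖W t z‖ ≤ C := by
  obtain ⟨C, hC⟩ := (isCompact_Icc.prod (isCompact_closedBall (0 : E) R))
    |>.exists_bound_of_continuousOn hW.continuous.continuousOn
  exact ⟨C, fun t ht z hz => hC (t, z) ⟨ht, hz⟩⟩

variable [NormedSpace ℝ E]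

def IsSolution (W : ℝ → E → E) (a b : ℝ) (f : ℝ → E) : Prop :=
  ∀ t ∈ Icc a b, HasDerivWithinAt f (W t (f t)) (Icc a b) t

theorem IsSolution.continuousOn (hf : IsSolution W a b f) : ContinuousOn f (Icc a b) :=
  fun t ht => (hf t ht).continuousWithinAt

theorem IsSolution.mono (hf : IsSolution W a b f) {a' b' : ℝ} (h : Icc a' b' ⊆ Icc a b) :
    IsSolution W a' b' f :=
  fun t ht => (hf t (h ht)).mono h

theorem IsSolution.congr_field (hf : IsSolution W a b f)
    (h : ∀ t ∈ Icc a b, W t (f t) = V t (f t)) : IsSolution V a b f :=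
  fun t ht => h t ht ▸ hf t ht

theorem IsSolution.hasDerivWithinAt_Ici (hf : IsSolution W a b f) {t : ℝ} (ht : t ∈ Ico a b) :
    HasDerivWithinAt f (W t (f t)) (Ici t) t := by
  have h := (hf t (Ico_subset_Icc_self ht)).mono (Icc_subset_Icc_left ht.1)
  rwa [← Ici_inter_Iic, hasDerivWithinAt_inter (Iic_mem_nhds ht.2)] at h

theorem IsSolution.neg (hf : IsSolution W a b f) :
    IsSolution (fun t z => -W t (-z)) a b (fun t => -f t) := by
  intro t ht
  simp only [neg_neg]
  exact (hf t ht).neg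

theorem IsSolution.glue (hab : a ≤ b) (hbc : b ≤ c) (hf : IsSolution W a b f)
    (hg : IsSolution W b c g) (hfg : f b = g b) :
    ∃ h, IsSolution W a c h ∧ EqOn h f (Icc a b) ∧ EqOn h g (Icc b c) := by
  set h := fun t => if t ≤ b then f t else g t
  have hhf : EqOn h f (Icc a b) := fun t ht => if_pos ht.2
  have hhg : EqOn h g (Icc b c) := fun t ht => by
    rcases ht.1.eq_or_lt with rfl | hlt
    · exact (if_pos le_rfl).trans hfg
    · exact if_neg hlt.not_ge
  have left (t : ℝ) : HasDerivWithinAt h (W t (h t)) (Icc a b) t := by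
    by_cases ht : t ∈ Icc a b
    · rw [hhf ht]; exact (hf t ht).congr hhf (hhf ht)
    · exact hasDerivWithinAt_iff_hasFDerivWithinAt.2 (.of_notMem_closure (by rwa [closure_Icc]))
  have right (t : ℝ) : HasDerivWithinAt h (W t (h t)) (Icc b c) t := by
    by_cases ht : t ∈ Icc b c
    · rw [hhg ht]; exact (hg t ht).congr hhg (hhg ht)
    · exact hasDerivWithinAt_iff_hasFDerivWithinAt.2 (.of_notMem_closure (by rwa [closure_Icc]))
  refine ⟨h, fun t _ => ?_, hhf, hhg⟩
  rw [← Icc_union_Icc_eq_Icc hab hbc]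
  exact (left t).union (right t)

theorem IsSolution.exists_norm_le (hf : IsSolution W a b f) : ∃ R, ∀ t ∈ Icc a b, ‖f t‖ ≤ R :=
  isCompact_Icc.exists_bound_of_continuousOn hf.continuousOn

theorem IsLocallyLipschitzField.eqOn (hW : IsLocallyLipschitzField W) (hf : IsSolution W a b f)
    (hg : IsSolution W a b g) (h : f a = g a) : EqOn f g (Icc a b) := by
  obtain ⟨Rf, hRf⟩ := hf.exists_norm_le
  obtain ⟨Rg, hRg⟩ := hg.exists_norm_le
  obtain ⟨K, hK⟩ := hW.exists_lipschitzOnWith a b (max Rf Rg)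
  refine ODE_solution_unique_of_mem_Icc_right (s := fun _ => closedBall 0 (max Rf Rg))
    (fun t ht => hK t (Ico_subset_Icc_self ht)) hf.continuousOn (fun t => hf.hasDerivWithinAt_Ici)
    (fun t ht => ?_) hg.continuousOn (fun t => hg.hasDerivWithinAt_Ici) (fun t ht => ?_) h
  · exact mem_closedBall_zero_iff.2 ((hRf t (Ico_subset_Icc_self ht)).trans (le_max_left _ _))
  · exact mem_closedBall_zero_iff.2 ((hRg t (Ico_subset_Icc_self ht)).trans (le_max_right _ _))

end Solutions

section Box

variable {W : ℝ → ℝ × ℝ → ℝ × ℝ} {a b R : ℝ} {f : ℝ → ℝ × ℝ}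

/-- Retraction onto `closedBall 0 R`, a square for the sup norm of `ℝ × ℝ`. Composed with it, a
locally Lipschitz field becomes bounded and globally Lipschitz, hence has solutions on every time
interval, and these solve the original field as long as they stay in the ball. -/
def boxClamp (R : ℝ) (z : ℝ × ℝ) : ℝ × ℝ :=
  (max (-R) (min R z.1), max (-R) (min R z.2))

theorem lipschitzWith_boxClamp (R : ℝ) : LipschitzWith 1 (boxClamp R) := by
  have h : LipschitzWith 1 fun x : ℝ => max (-R) (min R x) :=
    (LipschitzWith.id.const_min R).const_max (-R)
  have := (h.comp LipschitzWith.prod_fst).prodMk (h.comp LipschitzWith.prod_snd)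
  rw [mul_one, max_self] at this
  exact this

theorem boxClamp_mem (hR : 0 ≤ R) (z : ℝ × ℝ) : boxClamp R z ∈ closedBall 0 R := by
  simp only [mem_closedBall_zero_iff, Prod.norm_def, Real.norm_eq_abs, boxClamp, max_le_iff,
    abs_le]
  exact ⟨⟨le_max_left _ _, by linarith, min_le_left _ _⟩, le_max_left _ _, by linarith,
    min_le_left _ _⟩

theorem boxClamp_of_mem {z : ℝ × ℝ} (hz : z ∈ closedBall 0 R) : boxClamp R z = z := by
  simp only [mem_closedBall_zero_iff, Prod.norm_def, Real.norm_eq_abs, max_le_iff, abs_le] at hz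
  simp [boxClamp, hz.1.1, hz.1.2, hz.2.1, hz.2.2]

theorem IsLocallyLipschitzField.exists_lipschitzWith_boxClamp (hW : IsLocallyLipschitzField W)
    (a b : ℝ) (hR : 0 ≤ R) :
    ∃ K : ℝ≥0, ∀ t ∈ Icc a b, LipschitzWith K fun z => W t (boxClamp R z) := by
  obtain ⟨K, hK⟩ := hW.exists_lipschitzOnWith a b R
  refine ⟨K, fun t ht => ?_⟩
  have := (hK t ht).comp ((lipschitzWith_boxClamp R).lipschitzOnWith (s := univ))
    (fun z _ => boxClamp_mem hR z)
  rwa [mul_one, lipschitzOnWith_univ] at this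

theorem IsLocallyLipschitzField.exists_isSolution_boxClamp (hW : IsLocallyLipschitzField W)
    (hab : a ≤ b) (hR : 0 ≤ R) (z₀ : ℝ × ℝ) :
    ∃ f, f a = z₀ ∧ IsSolution (fun t z => W t (boxClamp R z)) a b f := by
  obtain ⟨K, hK⟩ := hW.exists_lipschitzWith_boxClamp a b hR
  obtain ⟨C, hC⟩ := hW.exists_norm_le a b R
  have hC₀ : 0 ≤ C := (norm_nonneg _).trans (hC a ⟨le_rfl, hab⟩ 0 (mem_closedBall_self hR))
  have hPL : IsPicardLindelof (fun t z => W t (boxClamp R z)) (tmin := a) (tmax := b)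
      ⟨a, le_rfl, hab⟩ z₀ (C * (b - a)).toNNReal 0 C.toNNReal K :=
    { lipschitzOnWith := fun t ht => (hK t ht).lipschitzOnWith
      continuousOn := fun z _ =>
        (hW.continuous.comp (continuous_id.prodMk continuous_const)).continuousOn
      norm_le := fun t ht z _ => (hC t ht _ (boxClamp_mem hR z)).trans (le_coe_toNNReal C)
      mul_max_le := by
        rw [coe_toNNReal C hC₀, coe_toNNReal _ (by nlinarith), sub_self,
          max_eq_left (by linarith), NNReal.coe_zero, sub_zero] }
  exact hPL.exists_eq_forall_mem_Icc_hasDerivWithinAt₀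

theorem IsLocallyLipschitzField.exists_isSolution_dist_le (hW : IsLocallyLipschitzField W)
    (hab : a ≤ b) (hf : IsSolution W a b f) {ε : ℝ} (hε : 0 < ε) :
    ∃ δ > 0, ∀ z₀, dist z₀ (f a) < δ →
      ∃ g, g a = z₀ ∧ IsSolution W a b g ∧ ∀ t ∈ Icc a b, dist (g t) (f t) ≤ ε := by
  obtain ⟨Rf, hRf⟩ := hf.exists_norm_le
  have hR : 0 ≤ Rf + ε := by linarith [(norm_nonneg _).trans (hRf a ⟨le_rfl, hab⟩)]
  obtain ⟨K, hK⟩ := hW.exists_lipschitzWith_boxClamp a b hR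
  have hfV : IsSolution (fun t z => W t (boxClamp (Rf + ε) z)) a b f :=
    hf.congr_field fun t ht => by
      rw [boxClamp_of_mem (mem_closedBall_zero_iff.2 ((hRf t ht).trans (by linarith)))]
  refine ⟨ε / exp (K * (b - a)), by positivity, fun z₀ hz₀ => ?_⟩
  obtain ⟨g, rfl, hgV⟩ := hW.exists_isSolution_boxClamp hab hR z₀
  have hdist : ∀ t ∈ Icc a b, dist (g t) (f t) ≤ ε := by
    intro t ht
    calc dist (g t) (f t) ≤ ε / exp (K * (b - a)) * exp (K * (t - a)) :=
          dist_le_of_trajectories_ODE_of_mem (s := fun _ => univ)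
            (fun t ht => (hK t (Ico_subset_Icc_self ht)).lipschitzOnWith) hgV.continuousOn
            (fun _ => hgV.hasDerivWithinAt_Ici) (fun _ _ => trivial) hfV.continuousOn
            (fun _ => hfV.hasDerivWithinAt_Ici) (fun _ _ => trivial) hz₀.le t ht
      _ ≤ ε / exp (K * (b - a)) * exp (K * (b - a)) := by gcongr; exact ht.2
      _ = ε := div_mul_cancel₀ _ (exp_ne_zero _)
  refine ⟨g, rfl, hgV.congr_field fun t ht => ?_, hdist⟩
  rw [boxClamp_of_mem (mem_closedBall_zero_iff.2 ((norm_le_norm_add_const_of_dist_le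
    (hdist t ht)).trans (by linarith [hRf t ht])))]

theorem IsLocallyLipschitzField.exists_local_isSolution (hW : IsLocallyLipschitzField W) (s : ℝ)
    (hR : 0 ≤ R) {r : ℝ} (hr : 0 < r) :
    ∃ τ > 0, ∀ z₀ ∈ closedBall (0 : ℝ × ℝ) R, ∃ f, f s = z₀ ∧ IsSolution W s (s + τ) f ∧
      ∀ t ∈ Icc s (s + τ), dist (f t) z₀ ≤ r := by
  obtain ⟨C, hC⟩ := hW.exists_norm_le s (s + 1) (R + r)
  set τ := min 1 (r / max C 1)
  have hτ : 0 < τ := by positivity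
  have hCτ : max C 1 * τ ≤ r := by
    calc max C 1 * τ ≤ max C 1 * (r / max C 1) := by gcongr; exact min_le_right _ _
      _ = r := mul_div_cancel₀ _ (by positivity)
  refine ⟨τ, hτ, fun z₀ hz₀ => ?_⟩
  obtain ⟨f, hf₀, hf⟩ := hW.exists_isSolution_boxClamp (by linarith : s ≤ s + τ)
    (by linarith : 0 ≤ R + r) z₀
  have hdist : ∀ t ∈ Icc s (s + τ), dist (f t) z₀ ≤ r := by
    intro t ht
    rw [dist_eq_norm, ← hf₀]
    calc ‖f t - f s‖ ≤ max C 1 * (t - s) :=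
          norm_image_sub_le_of_norm_deriv_le_segment' hf (fun t ht =>
            (hC t ⟨ht.1, by linarith [ht.2, min_le_left 1 (r / max C 1)]⟩ _
              (boxClamp_mem (by linarith) _)).trans (le_max_left _ _)) t ht
      _ ≤ max C 1 * τ := by gcongr; linarith [ht.2]
      _ ≤ r := hCτ
  refine ⟨f, hf₀, hf.congr_field fun t ht => ?_, hdist⟩
  rw [boxClamp_of_mem (mem_closedBall_zero_iff.2 ((norm_le_norm_add_const_of_dist_le
    (hdist t ht)).trans (by linarith [mem_closedBall_zero_iff.1 hz₀])))]

end Box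

section SecondOrder

variable {W : ℝ → ℝ × ℝ → ℝ × ℝ} {s T c : ℝ} {f : ℝ → ℝ × ℝ}

theorem IsSolution.fst_le_of_accel_le (hW₁ : ∀ t z, (W t z).1 = z.2) (hf : IsSolution W s T f)
    (hp : (f s).2 ≤ 0) (hacc : ∀ t ∈ Icc s T, (W t (f t)).2 ≤ -c) :
    ∀ t ∈ Icc s T, (f t).1 ≤ (f s).1 - c * (t - s) ^ 2 / 2 := by
  have hspeed : ∀ t ∈ Icc s T, (f t).2 ≤ (f s).2 - c * (t - s) :=
    image_le_of_deriv_right_le_deriv_boundary (continuous_snd.comp_continuousOn hf.continuousOn)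
      (fun t ht => (hf.hasDerivWithinAt_Ici ht).snd) (by simp) (by fun_prop)
      (fun t _ => by simpa using ((((hasDerivAt_id t).sub_const s).const_mul c).const_sub
        (f s).2).hasDerivWithinAt)
      (fun t ht => hacc t (Ico_subset_Icc_self ht))
  refine image_le_of_deriv_right_le_deriv_boundary
    (continuous_fst.comp_continuousOn hf.continuousOn)
    (fun t ht => (hf.hasDerivWithinAt_Ici ht).fst) (by simp) (by fun_prop)
    (B' := fun t => -(c * (t - s))) (fun t _ => ?_) (fun t ht => ?_)
  · have h := (((((hasDerivAt_id' t).sub_const s).pow 2).const_mul c).div_const 2).const_sub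
      (f s).1
    exact (h.congr_deriv (by push_cast; ring)).hasDerivWithinAt
  · rw [hW₁]
    linarith [hspeed t (Ico_subset_Icc_self ht)]

theorem IsLocallyLipschitzField.exists_isSolution_fst_lt (hW : IsLocallyLipschitzField W)
    (hW₁ : ∀ t z, (W t z).1 = z.2) {q p : ℝ} (hp : p ≤ 0) (hacc : (W s (q, p)).2 < 0) :
    ∃ δ > 0, ∀ x, |x - q| < δ → ∃ T, s ≤ T ∧ ∃ f, IsSolution W s T f ∧ f s = (x, p) ∧
      (f T).1 < q ∧ ∀ t ∈ Icc s T, (f t).1 ≤ x := by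
  -- The acceleration stays below `-c` near `(s, (q, p))`, so there `q` drops by at least
  -- `c τ² / 2` in time `τ`, uniformly in the starting position.
  obtain ⟨c, hc, hcW⟩ : ∃ c > 0, (W s (q, p)).2 < -c :=
    ⟨-(W s (q, p)).2 / 2, by linarith, by linarith⟩
  obtain ⟨ρ, hρ, hnear⟩ :
      ∃ ρ > 0, ∀ t z, dist t s < ρ → dist z (q, p) < ρ → (W t z).2 < -c := by
    obtain ⟨ρ, hρ, h⟩ := Metric.eventually_nhds_iff.1 <|
      (continuous_snd.comp hW.continuous).continuousAt (x := (s, (q, p))).eventually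
        (gt_mem_nhds hcW)
    exact ⟨ρ, hρ, fun t z ht hz => h (y := (t, z)) (by rw [Prod.dist_eq]; exact max_lt ht hz)⟩
  obtain ⟨τ, hτ, hsol⟩ :=
    hW.exists_local_isSolution s (R := ‖(q, p)‖ + ρ / 2) (by positivity) (half_pos hρ)
  set τ' := min τ (ρ / 2)
  have hτ' : 0 < τ' := by positivity
  refine ⟨min (ρ / 2) (c * τ' ^ 2 / 2), by positivity, fun x hx => ?_⟩
  have hxq : dist (x, p) (q, p) < ρ / 2 := by
    simpa [Prod.dist_eq, Real.dist_eq] using hx.trans_le (min_le_left _ _)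
  obtain ⟨f, hf₀, hf, hfdist⟩ := hsol (x, p)
    (mem_closedBall_zero_iff.2 (norm_le_norm_add_const_of_dist_le hxq.le))
  have hf' : IsSolution W s (s + τ') f := hf.mono (Icc_subset_Icc le_rfl (by simp [τ']))
  have hacc' : ∀ t ∈ Icc s (s + τ'), (W t (f t)).2 ≤ -c := fun t ht => by
    refine (hnear t (f t) ?_ ?_).le
    · rw [Real.dist_eq, abs_of_nonneg (by linarith [ht.1])]
      linarith [ht.2, min_le_right τ (ρ / 2)]
    · linarith [dist_triangle (f t) (x, p) (q, p),
        hfdist t ⟨ht.1, ht.2.trans (by simp [τ'])⟩]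
  have hbound := hf'.fst_le_of_accel_le hW₁ (by rw [hf₀]; exact hp) hacc'
  simp only [hf₀] at hbound
  refine ⟨s + τ', by linarith, f, hf', hf₀, ?_, fun t ht => ?_⟩
  · have := hbound (s + τ') ⟨by linarith, le_rfl⟩
    rw [add_sub_cancel_left] at this
    linarith [(abs_lt.1 hx).2, min_le_right (ρ / 2) (c * τ' ^ 2 / 2)]
  · nlinarith [hbound t ht, sq_nonneg (t - s)]

theorem IsLocallyLipschitzField.exists_isSolution_lt_fst (hW : IsLocallyLipschitzField W)
    (hW₁ : ∀ t z, (W t z).1 = z.2) {q p : ℝ} (hp : 0 ≤ p) (hacc : 0 < (W s (q, p)).2) :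
    ∃ δ > 0, ∀ x, |x - q| < δ → ∃ T, s ≤ T ∧ ∃ f, IsSolution W s T f ∧ f s = (x, p) ∧
      q < (f T).1 ∧ ∀ t ∈ Icc s T, x ≤ (f t).1 := by
  obtain ⟨δ, hδ, h⟩ := hW.neg.exists_isSolution_fst_lt (fun t z => by simp [hW₁])
    (q := -q) (p := -p) (by linarith) (by simpa using hacc)
  refine ⟨δ, hδ, fun x hx => ?_⟩
  obtain ⟨T, hsT, f, hf, hf₀, hfT, hfle⟩ := h (-x) (by rwa [← neg_sub', abs_neg])
  refine ⟨T, hsT, fun t => -f t, by simpa using hf.neg, by simp [hf₀], ?_, fun t ht => ?_⟩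
  · simp only [Prod.fst_neg]; linarith
  · simp only [Prod.fst_neg]; linarith [hfle t ht]

end SecondOrder

section Reach

variable {E : Type*} [NormedAddCommGroup E] [NormedSpace ℝ E]

def reachSet (W : ℝ → E → E) (t₀ : ℝ) (U A : Set E) : Set E :=
  {z | ∃ T, t₀ ≤ T ∧ ∃ f, IsSolution W t₀ T f ∧ f t₀ = z ∧ (∀ t ∈ Icc t₀ T, f t ∈ U) ∧ f T ∈ A}

theorem IsLocallyLipschitzField.disjoint_reachSet {W : ℝ → E → E} {t₀ : ℝ} {U A U' A' : Set E}
    (hW : IsLocallyLipschitzField W) (h₁ : Disjoint A U') (h₂ : Disjoint A' U) :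
    Disjoint (reachSet W t₀ U A) (reachSet W t₀ U' A') := by
  rw [Set.disjoint_left]
  rintro _ ⟨T, hT, f, hf, rfl, hfU, hfA⟩ ⟨T', hT', g, hg, hg₀, hgU, hgA⟩
  rcases le_total T T' with h | h
  · have := hW.eqOn hf (hg.mono (Icc_subset_Icc le_rfl h)) hg₀.symm ⟨hT, le_rfl⟩
    exact Set.disjoint_left.1 h₁ hfA (this ▸ hgU T ⟨hT, h⟩)
  · have := hW.eqOn hg (hf.mono (Icc_subset_Icc le_rfl h)) hg₀ ⟨hT', le_rfl⟩
    exact Set.disjoint_left.1 h₂ hgA (this ▸ hfU T' ⟨hT', h⟩)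

theorem IsLocallyLipschitzField.isOpen_reachSet {W : ℝ → ℝ × ℝ → ℝ × ℝ} {t₀ : ℝ}
    {U A : Set (ℝ × ℝ)} (hW : IsLocallyLipschitzField W) (hU : IsOpen U) (hA : IsOpen A) :
    IsOpen (reachSet W t₀ U A) := by
  refine Metric.isOpen_iff.2 ?_
  rintro _ ⟨T, hT, f, hf, rfl, hfU, hfA⟩
  obtain ⟨ε₁, hε₁, hthick⟩ := (isCompact_Icc.image_of_continuousOn
    hf.continuousOn).exists_thickening_subset_open hU (image_subset_iff.2 hfU)
  obtain ⟨ε₂, hε₂, hball⟩ := Metric.isOpen_iff.1 hA _ hfA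
  obtain ⟨δ, hδ, htube⟩ := hW.exists_isSolution_dist_le hT hf (ε := min ε₁ ε₂ / 2) (by positivity)
  refine ⟨δ, hδ, fun z hz => ?_⟩
  obtain ⟨g, hg₀, hg, hgf⟩ := htube z hz
  have hε : min ε₁ ε₂ / 2 < min ε₁ ε₂ := by linarith [lt_min hε₁ hε₂]
  refine ⟨T, hT, g, hg, hg₀, fun t ht => hthick ?_, hball ?_⟩
  · exact mem_thickening_iff.2 ⟨f t, mem_image_of_mem f ht,
      (hgf t ht).trans_lt (hε.trans_le (min_le_left _ _))⟩
  · exact (hgf T ⟨hT, le_rfl⟩).trans_lt (hε.trans_le (min_le_right _ _))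

end Reach

section Strip

variable {W : ℝ → ℝ × ℝ → ℝ × ℝ} {α β t₀ : ℝ}

theorem IsSolution.exists_extension_fst_lt (hW : IsLocallyLipschitzField W)
    (hW₁ : ∀ t z, (W t z).1 = z.2) {a b : ℝ} {f : ℝ → ℝ × ℝ} (hf : IsSolution W a b f)
    (hab : a < b) (hmin : IsMinOn (fun t => (f t).1) (Icc a b) b) (hacc : (W b (f b)).2 < 0) :
    ∃ c, b ≤ c ∧ ∃ g, IsSolution W a c g ∧ EqOn g f (Icc a b) ∧ (g c).1 < (f b).1 ∧
      ∀ t ∈ Icc b c, (g t).1 ≤ (f b).1 := by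
  have hp : (f b).2 ≤ 0 := by
    simpa [hW₁] using hmin.hasDerivWithinAt_nonpos (hf b ⟨hab.le, le_rfl⟩).fst hab
  obtain ⟨δ, hδ, hcross⟩ := hW.exists_isSolution_fst_lt hW₁ hp (by rwa [Prod.mk.eta])
  obtain ⟨c, hbc, g, hg, hg₀, hgc, hgle⟩ := hcross (f b).1 (by simpa using hδ)
  obtain ⟨h, hh, hhf, hhg⟩ := hf.glue hab.le hbc hg (by rw [hg₀])
  exact ⟨c, hbc, h, hh, hhf, by rwa [hhg ⟨hbc, le_rfl⟩],
    fun t ht => by rw [hhg ht]; exact hgle t ht⟩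

theorem IsSolution.exists_extension_lt_fst (hW : IsLocallyLipschitzField W)
    (hW₁ : ∀ t z, (W t z).1 = z.2) {a b : ℝ} {f : ℝ → ℝ × ℝ} (hf : IsSolution W a b f)
    (hab : a < b) (hmax : IsMaxOn (fun t => (f t).1) (Icc a b) b) (hacc : 0 < (W b (f b)).2) :
    ∃ c, b ≤ c ∧ ∃ g, IsSolution W a c g ∧ EqOn g f (Icc a b) ∧ (f b).1 < (g c).1 ∧
      ∀ t ∈ Icc b c, (f b).1 ≤ (g t).1 := by
  have hp : 0 ≤ (f b).2 := by
    simpa [hW₁] using hmax.hasDerivWithinAt_nonneg (hf b ⟨hab.le, le_rfl⟩).fst hab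
  obtain ⟨δ, hδ, hcross⟩ := hW.exists_isSolution_lt_fst hW₁ hp (by rwa [Prod.mk.eta])
  obtain ⟨c, hbc, g, hg, hg₀, hgc, hgle⟩ := hcross (f b).1 (by simpa using hδ)
  obtain ⟨h, hh, hhf, hhg⟩ := hf.glue hab.le hbc hg (by rw [hg₀])
  exact ⟨c, hbc, h, hh, hhf, by rwa [hhg ⟨hbc, le_rfl⟩],
    fun t ht => by rw [hhg ht]; exact hgle t ht⟩

theorem exists_mem_Ioo_mem_reachSet_fst_lt (hW : IsLocallyLipschitzField W)
    (hW₁ : ∀ t z, (W t z).1 = z.2) (hαβ : α < β) (hα : ∀ t p, (W t (α, p)).2 < 0) (t₀ : ℝ) :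
    ∃ x ∈ Ioo α β, (x, 0) ∈ reachSet W t₀ {z | z.1 < β} {z | z.1 < α} := by
  obtain ⟨δ, hδ, hcross⟩ := hW.exists_isSolution_fst_lt hW₁ le_rfl (hα t₀ 0)
  have hε : 0 < min δ (β - α) / 2 := by have := sub_pos.2 hαβ; positivity
  have hx : α + min δ (β - α) / 2 ∈ Ioo α β := ⟨by linarith, by linarith [min_le_right δ (β - α)]⟩
  obtain ⟨T, hT, f, hf, hf₀, hfT, hfle⟩ := hcross (α + min δ (β - α) / 2) (by
    rw [add_sub_cancel_left, abs_of_pos hε]; linarith [min_le_left δ (β - α)])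
  exact ⟨_, hx, T, hT, f, hf, hf₀, fun t ht => (hfle t ht).trans_lt hx.2, hfT⟩

theorem exists_mem_Ioo_mem_reachSet_lt_fst (hW : IsLocallyLipschitzField W)
    (hW₁ : ∀ t z, (W t z).1 = z.2) (hαβ : α < β) (hβ : ∀ t p, 0 < (W t (β, p)).2) (t₀ : ℝ) :
    ∃ x ∈ Ioo α β, (x, 0) ∈ reachSet W t₀ {z | α < z.1} {z | β < z.1} := by
  obtain ⟨δ, hδ, hcross⟩ := hW.exists_isSolution_lt_fst hW₁ le_rfl (hβ t₀ 0)
  have hε : 0 < min δ (β - α) / 2 := by have := sub_pos.2 hαβ; positivity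
  have hx : β - min δ (β - α) / 2 ∈ Ioo α β := ⟨by linarith [min_le_right δ (β - α)], by linarith⟩
  obtain ⟨T, hT, f, hf, hf₀, hfT, hfle⟩ := hcross (β - min δ (β - α) / 2) (by
    rw [sub_sub_cancel_left, abs_neg, abs_of_pos hε]; linarith [min_le_left δ (β - α)])
  exact ⟨_, hx, T, hT, f, hf, hf₀, fun t ht => hx.1.trans_le (hfle t ht), hfT⟩

theorem exists_mem_Ioo_notMem_reachSet (hW : IsLocallyLipschitzField W)
    (hW₁ : ∀ t z, (W t z).1 = z.2) (hαβ : α < β) (hα : ∀ t p, (W t (α, p)).2 < 0)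
    (hβ : ∀ t p, 0 < (W t (β, p)).2) (t₀ : ℝ) :
    ∃ x ∈ Ioo α β, (x, 0) ∉ reachSet W t₀ {z | z.1 < β} {z | z.1 < α} ∧
      (x, 0) ∉ reachSet W t₀ {z | α < z.1} {z | β < z.1} := by
  have hembed : Continuous fun x : ℝ => (x, (0 : ℝ)) := by fun_prop
  have hlt {γ : ℝ} : IsOpen {z : ℝ × ℝ | z.1 < γ} := isOpen_lt continuous_fst continuous_const
  have hgt {γ : ℝ} : IsOpen {z : ℝ × ℝ | γ < z.1} := isOpen_lt continuous_const continuous_fst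
  set L := (fun x : ℝ => (x, (0 : ℝ))) ⁻¹' reachSet W t₀ {z | z.1 < β} {z | z.1 < α}
  set R := (fun x : ℝ => (x, (0 : ℝ))) ⁻¹' reachSet W t₀ {z | α < z.1} {z | β < z.1}
  have hLR : Disjoint L R := Disjoint.preimage _ <| hW.disjoint_reachSet
    (Set.disjoint_left.2 fun _ (h : _ < α) h' => lt_asymm h h')
    (Set.disjoint_left.2 fun _ (h : β < _) h' => lt_asymm h h')
  by_contra! hcover
  obtain ⟨x, -, hxL, hxR⟩ := isPreconnected_Ioo L R
    ((hW.isOpen_reachSet hlt hlt).preimage hembed) ((hW.isOpen_reachSet hgt hgt).preimage hembed)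
    (fun x hx => or_iff_not_imp_left.2 (hcover x hx))
    (exists_mem_Ioo_mem_reachSet_fst_lt hW hW₁ hαβ hα t₀)
    (exists_mem_Ioo_mem_reachSet_lt_fst hW hW₁ hαβ hβ t₀)
  exact Set.disjoint_left.1 hLR hxL hxR

theorem IsSolution.mem_reachSet_of_fst_notMem_Ioo (hW : IsLocallyLipschitzField W)
    (hW₁ : ∀ t z, (W t z).1 = z.2) (hαβ : α < β) (hα : ∀ t p, (W t (α, p)).2 < 0)
    (hβ : ∀ t p, 0 < (W t (β, p)).2) {T x : ℝ} {f : ℝ → ℝ × ℝ} (hf : IsSolution W t₀ T f)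
    (hT : t₀ ≤ T) (hf₀ : f t₀ = (x, 0)) (hx : x ∈ Ioo α β) (hfT : (f T).1 ∉ Ioo α β) :
    (x, 0) ∈ reachSet W t₀ {z | z.1 < β} {z | z.1 < α} ∨
      (x, 0) ∈ reachSet W t₀ {z | α < z.1} {z | β < z.1} := by
  -- At the first exit time `T₁` the position is on a wall and extremal on `[t₀, T₁]`, so the
  -- velocity does not point back into the strip and the solution can be continued across the wall.
  obtain ⟨T₁, hT₁, hfront, hbefore⟩ := exists_first_mem_frontier (φ := fun t => (f t).1) hT
    (continuous_fst.comp_continuousOn hf.continuousOn) isOpen_Ioo (by rwa [hf₀]) hfT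
  have hf₁ : IsSolution W t₀ T₁ f := hf.mono (Icc_subset_Icc le_rfl hT₁.2)
  have hstart {g : ℝ → ℝ × ℝ} (hgf : EqOn g f (Icc t₀ T₁)) : g t₀ = (x, 0) :=
    (hgf ⟨le_rfl, hT₁.1.le⟩).trans hf₀
  have hwall : (f T₁).1 = α ∨ (f T₁).1 = β := by simpa [frontier_Ioo hαβ] using hfront
  rcases hwall with hαT | hβT
  · left
    have hmin : IsMinOn (fun t => (f t).1) (Icc t₀ T₁) T₁ := isMinOn_iff.2 fun t ht => by
      rcases ht.2.lt_or_eq with h | rfl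
      exacts [hαT ▸ (hbefore t ⟨ht.1, h⟩).1.le, le_rfl]
    obtain ⟨c, hc, g, hg, hgf, hgc, hgle⟩ := hf₁.exists_extension_fst_lt hW hW₁ hT₁.1 hmin
      (by rw [← Prod.mk.eta (p := f T₁), hαT]; exact hα _ _)
    refine ⟨c, hT₁.1.le.trans hc, g, hg, hstart hgf, fun t ht => ?_, hαT ▸ hgc⟩
    rcases lt_or_ge t T₁ with h | h
    · show (g t).1 < β
      rw [hgf ⟨ht.1, h.le⟩]; exact (hbefore t ⟨ht.1, h⟩).2
    · exact (hgle t ⟨h, ht.2⟩).trans_lt (hαT ▸ hαβ)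
  · right
    have hmax : IsMaxOn (fun t => (f t).1) (Icc t₀ T₁) T₁ := isMaxOn_iff.2 fun t ht => by
      rcases ht.2.lt_or_eq with h | rfl
      exacts [hβT ▸ (hbefore t ⟨ht.1, h⟩).2.le, le_rfl]
    obtain ⟨c, hc, g, hg, hgf, hgc, hgle⟩ := hf₁.exists_extension_lt_fst hW hW₁ hT₁.1 hmax
      (by rw [← Prod.mk.eta (p := f T₁), hβT]; exact hβ _ _)
    refine ⟨c, hT₁.1.le.trans hc, g, hg, hstart hgf, fun t ht => ?_, hβT ▸ hgc⟩
    rcases lt_or_ge t T₁ with h | h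
    · show α < (g t).1
      rw [hgf ⟨ht.1, h.le⟩]; exact (hbefore t ⟨ht.1, h⟩).1
    · exact (hβT ▸ hαβ).trans_le (hgle t ⟨h, ht.2⟩)

theorem exists_forall_isSolution_fst_mem_Ioo (hW : IsLocallyLipschitzField W)
    (hW₁ : ∀ t z, (W t z).1 = z.2) (hαβ : α < β) (hα : ∀ t p, (W t (α, p)).2 < 0)
    (hβ : ∀ t p, 0 < (W t (β, p)).2) (t₀ : ℝ) :
    ∃ x ∈ Ioo α β, ∀ T f, IsSolution W t₀ T f → f t₀ = (x, 0) →
      ∀ t ∈ Icc t₀ T, (f t).1 ∈ Ioo α β := by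
  obtain ⟨x, hx, hxL, hxR⟩ := exists_mem_Ioo_notMem_reachSet hW hW₁ hαβ hα hβ t₀
  refine ⟨x, hx, fun T f hf hf₀ t ht => by_contra fun hft => ?_⟩
  rcases (hf.mono (Icc_subset_Icc le_rfl ht.2)).mem_reachSet_of_fst_notMem_Ioo hW hW₁ hαβ hα hβ
    ht.1 hf₀ hx hft with h | h
  exacts [hxL h, hxR h]

end Strip

noncomputable def pendulumField (u : ℝ → ℝ → ℝ → ℝ) (t : ℝ) (z : ℝ × ℝ) : ℝ × ℝ :=
  (z.2, u z.1 z.2 t * sin z.1 - cos z.1)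

theorem isLocallyLipschitzField_pendulumField {u : ℝ → ℝ → ℝ → ℝ}
    (hu_cont : Continuous fun x : ℝ × ℝ × ℝ => u x.1 x.2.1 x.2.2)
    (hu_lip : ∀ K : Set (ℝ × ℝ × ℝ), IsCompact K → ∃ L : ℝ,
      ∀ a ∈ K, ∀ b ∈ K, a.2.2 = b.2.2 →
        |u a.1 a.2.1 a.2.2 - u b.1 b.2.1 b.2.2| ≤
          L * dist ((a.1, a.2.1) : ℝ × ℝ) ((b.1, b.2.1) : ℝ × ℝ)) :
    IsLocallyLipschitzField (pendulumField u) where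
  continuous := by
    have hu : Continuous fun x : ℝ × ℝ × ℝ => u x.2.1 x.2.2 x.1 :=
      hu_cont.comp (by fun_prop : Continuous fun x : ℝ × ℝ × ℝ => (x.2.1, x.2.2, x.1))
    exact continuous_snd.snd.prodMk ((hu.mul (continuous_sin.comp continuous_snd.fst)).sub
      (continuous_cos.comp continuous_snd.fst))
  exists_lipschitzOnWith a b R := by
    set K := Icc (-R) R ×ˢ Icc (-R) R ×ˢ Icc a b
    have hK : IsCompact K := isCompact_Icc.prod (isCompact_Icc.prod isCompact_Icc)
    obtain ⟨M, hM⟩ := hK.exists_bound_of_continuousOn hu_cont.continuousOn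
    obtain ⟨L, hL⟩ := hu_lip K hK
    refine ⟨(max M 0 + max L 0 + 1).toNNReal, fun t ht =>
      LipschitzOnWith.of_dist_le_mul fun z hz w hw => ?_⟩
    have hmem {z : ℝ × ℝ} (hz : z ∈ closedBall 0 R) : (z.1, z.2, t) ∈ K := by
      simp only [mem_closedBall_zero_iff, Prod.norm_def, Real.norm_eq_abs, max_le_iff] at hz
      exact ⟨abs_le.1 hz.1, abs_le.1 hz.2, ht⟩
    have hd : dist z w = max |z.1 - w.1| |z.2 - w.2| := by simp [Prod.dist_eq, Real.dist_eq]
    have h₁ : |z.1 - w.1| ≤ dist z w := hd ▸ le_max_left _ _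
    have h₂ : |z.2 - w.2| ≤ dist z w := hd ▸ le_max_right _ _
    have hu : |u z.1 z.2 t| ≤ max M 0 := (hM _ (hmem hz)).trans (le_max_left _ _)
    have hdu : |u z.1 z.2 t - u w.1 w.2 t| ≤ max L 0 * dist z w :=
      (hL _ (hmem hz) _ (hmem hw) rfl).trans
        (mul_le_mul_of_nonneg_right (le_max_left _ _) dist_nonneg)
    have hsin : |sin z.1 - sin w.1| ≤ dist z w := (abs_sin_sub_sin_le _ _).trans h₁
    have hcos : |cos z.1 - cos w.1| ≤ dist z w := (abs_cos_sub_cos_le _ _).trans h₁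
    have hacc : |u z.1 z.2 t * sin z.1 - cos z.1 - (u w.1 w.2 t * sin w.1 - cos w.1)| ≤
        (max M 0 + max L 0 + 1) * dist z w := by
      calc _ = |u z.1 z.2 t * (sin z.1 - sin w.1) + sin w.1 * (u z.1 z.2 t - u w.1 w.2 t)
              - (cos z.1 - cos w.1)| := by ring_nf
        _ ≤ |u z.1 z.2 t| * |sin z.1 - sin w.1| + |sin w.1| * |u z.1 z.2 t - u w.1 w.2 t|
              + |cos z.1 - cos w.1| := by
          rw [← abs_mul, ← abs_mul]; exact (abs_sub _ _).trans (by gcongr; exact abs_add_le _ _)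
        _ ≤ max M 0 * dist z w + 1 * (max L 0 * dist z w) + dist z w := by
          gcongr; exact abs_sin_le_one _
        _ = _ := by ring
    rw [coe_toNNReal _ (by positivity), pendulumField, pendulumField, Prod.dist_eq, Real.dist_eq,
      Real.dist_eq]
    refine max_le (h₂.trans ?_) hacc
    nlinarith [dist_nonneg (x := z) (y := w), le_max_right M 0, le_max_right L 0]

end InvertedPendulum

open InvertedPendulum

/-- For any control `u` (continuous in all variables, locally Lipschitz in `(q,p)`) and any
`t₀`, there is an initial condition `(q₀,p₀)` with `0 < q₀ < π` such that every solution of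
`q̇ = p, ṗ = u(q,p,t)·sin q − cos q` starting there at time `t₀` satisfies `0 < q(t) < π`
for all `t ≥ t₀` in its interval of existence: the pendulum never falls. -/
theorem inverted_pendulum_exists_never_falling_solution
    (u : ℝ → ℝ → ℝ → ℝ)
    (hu_cont : Continuous fun x : ℝ × ℝ × ℝ => u x.1 x.2.1 x.2.2)
    (hu_lip : ∀ K : Set (ℝ × ℝ × ℝ), IsCompact K → ∃ L : ℝ,
      ∀ a ∈ K, ∀ b ∈ K, a.2.2 = b.2.2 →
        |u a.1 a.2.1 a.2.2 - u b.1 b.2.1 b.2.2| ≤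
          L * dist ((a.1, a.2.1) : ℝ × ℝ) ((b.1, b.2.1) : ℝ × ℝ))
    (t₀ : ℝ) :
    ∃ q₀ p₀ : ℝ, 0 < q₀ ∧ q₀ < π ∧
      ∀ I : Set ℝ, t₀ ∈ I → I.OrdConnected →
        ∀ q p : ℝ → ℝ,
          (∀ t ∈ I, HasDerivWithinAt q (p t) I t) →
          (∀ t ∈ I, HasDerivWithinAt p
            (u (q t) (p t) t * sin (q t) - cos (q t)) I t) →
          q t₀ = q₀ → p t₀ = p₀ →
          ∀ t ∈ I, t₀ ≤ t → 0 < q t ∧ q t < π := by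
  obtain ⟨x, hx, hstay⟩ := exists_forall_isSolution_fst_mem_Ioo
    (isLocallyLipschitzField_pendulumField hu_cont hu_lip) (fun _ _ => rfl) pi_pos
    (fun t p => by simp [pendulumField]) (fun t p => by simp [pendulumField]) t₀
  refine ⟨x, 0, hx.1, hx.2, fun I ht₀ hI q p hq hp hq₀ hp₀ t ht htt => ?_⟩
  have hsub : Icc t₀ t ⊆ I := hI.out ht₀ ht
  exact hstay t (fun s => (q s, p s))
    (fun s hs => ((hq s (hsub hs)).prodMk (hp s (hsub hs))).mono hsub) (by rw [hq₀, hp₀])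
    t ⟨htt, le_rfl⟩
end

section
/- Let u : ℝ³ → ℝ be continuous in all variables and locally Lipschitz in (q,p), and let (q(t), p(t)) be a solution of the system q̇ = p, ṗ = u(q,p,t)·sin q − cos q defined on a neighborhood of t₀. If q(t₀) = 0 and p(t₀) = 0, then q̈(t₀) = −1; consequently there exists δ > 0 such that q(t) < 0 for all t with 0 < |t − t₀| ≤ δ (the trajectory is externally tangent to the region {0 ≤ q ≤ π} at this point). Similarly, if q(t₀) = π and p(t₀) = 0, then q̈(t₀) = 1 and there exists δ > 0 such that q(t) > π for all t with 0 < |t − t₀| ≤ δ. -/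
/-!
At a point where `q = 0` and `p = q̇ = 0` the equation gives `q̈ = u · sin 0 - cos 0 = -1`
whatever the control is, so `q̇ = p` changes sign from `+` to `-` through `t₀` and `q` has a strict
local maximum `0` there: a strict second derivative test. At `q = π` one has `q̈ = 1` and the
same test applied to `-q` gives a strict local minimum `π`.
-/

open Real Set Filter Topology

lemma eventually_nhdsNE_lt_of_sign_eq {q p : ℝ → ℝ} {t₀ : ℝ}
    (hq : ∀ᶠ t in 𝓝 t₀, HasDerivAt q (p t) t)
    (hp : ∀ᶠ t in 𝓝 t₀, SignType.sign (p t) = SignType.sign (t₀ - t)) :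
    ∀ᶠ t in 𝓝[≠] t₀, q t < q t₀ := by
  obtain ⟨δ, hδ, hball⟩ := Metric.eventually_nhds_iff_ball.mp (hq.and hp)
  have hIoc : Ioc (t₀ - δ) t₀ ⊆ Metric.ball t₀ δ := fun x hx => by
    rw [Real.ball_eq_Ioo]; exact ⟨hx.1, by linarith [hx.2]⟩
  have hIco : Ico t₀ (t₀ + δ) ⊆ Metric.ball t₀ δ := fun x hx => by
    rw [Real.ball_eq_Ioo]; exact ⟨by linarith [hx.1], hx.2⟩
  have hmono : StrictMonoOn q (Ioc (t₀ - δ) t₀) := by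
    refine strictMonoOn_of_hasDerivWithinAt_pos (f' := p) (convex_Ioc _ _)
      (fun x hx => (hball x (hIoc hx)).1.continuousAt.continuousWithinAt) (fun x hx => ?_)
      (fun x hx => ?_)
    · exact (hball x (hIoc (interior_subset hx))).1.hasDerivWithinAt
    · rw [interior_Ioc] at hx
      rw [← sign_eq_one_iff, (hball x (hIoc (Ioo_subset_Ioc_self hx))).2,
        sign_eq_one_iff, sub_pos]
      exact hx.2
  have hanti : StrictAntiOn q (Ico t₀ (t₀ + δ)) := by
    refine strictAntiOn_of_hasDerivWithinAt_neg (f' := p) (convex_Ico _ _)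
      (fun x hx => (hball x (hIco hx)).1.continuousAt.continuousWithinAt) (fun x hx => ?_)
      (fun x hx => ?_)
    · exact (hball x (hIco (interior_subset hx))).1.hasDerivWithinAt
    · rw [interior_Ico] at hx
      rw [← sign_eq_neg_one_iff, (hball x (hIco (Ioo_subset_Ico_self hx))).2,
        sign_eq_neg_one_iff, sub_neg]
      exact hx.1
  filter_upwards [nhdsWithin_le_nhds (Metric.ball_mem_nhds t₀ hδ), self_mem_nhdsWithin]
    with t ht hne
  rw [Real.ball_eq_Ioo] at ht
  rcases lt_or_gt_of_ne hne with hlt | hgt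
  · exact hmono ⟨ht.1, hlt.le⟩ ⟨by linarith, le_rfl⟩ hlt
  · exact hanti ⟨le_rfl, by linarith⟩ ⟨hgt.le, ht.2⟩ hgt

lemma eventually_nhdsNE_lt_of_hasDerivAt_of_hasDerivAt_neg {q p : ℝ → ℝ} {t₀ c : ℝ}
    (hq : ∀ᶠ t in 𝓝 t₀, HasDerivAt q (p t) t) (hp₀ : p t₀ = 0) (hp : HasDerivAt p c t₀)
    (hc : c < 0) :
    ∀ᶠ t in 𝓝[≠] t₀, q t < q t₀ :=
  eventually_nhdsNE_lt_of_sign_eq hq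
    (eventually_nhdsWithin_sign_eq_of_deriv_neg (hp.deriv ▸ hc) hp₀)

lemma exists_pos_forall_of_eventually_nhdsNE {P : ℝ → Prop} {t₀ : ℝ}
    (h : ∀ᶠ t in 𝓝[≠] t₀, P t) :
    ∃ δ > 0, ∀ t : ℝ, 0 < |t - t₀| → |t - t₀| ≤ δ → P t := by
  obtain ⟨δ, hδ, hball⟩ := Metric.eventually_nhds_iff_ball.mp (eventually_nhdsWithin_iff.mp h)
  refine ⟨δ / 2, half_pos hδ, fun t hpos hle => hball t ?_ ?_⟩
  · rw [Metric.mem_ball, Real.dist_eq]; linarith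
  · exact sub_ne_zero.mp (abs_pos.mp hpos)

theorem inverted_pendulum_external_tangency_general
    (u : ℝ → ℝ → ℝ → ℝ)
    (t₀ ε : ℝ) (hε : 0 < ε) (q p : ℝ → ℝ)
    (hq : ∀ t ∈ Ioo (t₀ - ε) (t₀ + ε), HasDerivAt q (p t) t)
    (hp : ∀ t ∈ Ioo (t₀ - ε) (t₀ + ε), HasDerivAt p
      (u (q t) (p t) t * sin (q t) - cos (q t)) t) :
    (q t₀ = 0 ∧ p t₀ = 0 →
      u (q t₀) (p t₀) t₀ * sin (q t₀) - cos (q t₀) = -1 ∧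
      ∃ δ > 0, ∀ t : ℝ, 0 < |t - t₀| → |t - t₀| ≤ δ → q t < 0) ∧
    (q t₀ = π ∧ p t₀ = 0 →
      u (q t₀) (p t₀) t₀ * sin (q t₀) - cos (q t₀) = 1 ∧
      ∃ δ > 0, ∀ t : ℝ, 0 < |t - t₀| → |t - t₀| ≤ δ → q t > π) := by
  have hnhds : Ioo (t₀ - ε) (t₀ + ε) ∈ 𝓝 t₀ := Ioo_mem_nhds (by linarith) (by linarith)
  have hq' : ∀ᶠ t in 𝓝 t₀, HasDerivAt q (p t) t := eventually_of_mem hnhds hq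
  have hp' := hp t₀ (mem_of_mem_nhds hnhds)
  refine ⟨fun ⟨hq₀, hp₀⟩ => ?_, fun ⟨hq₀, hp₀⟩ => ?_⟩
  · have hacc : u (q t₀) (p t₀) t₀ * sin (q t₀) - cos (q t₀) = -1 := by simp [hq₀]
    refine ⟨hacc, ?_⟩
    have hmax := eventually_nhdsNE_lt_of_hasDerivAt_of_hasDerivAt_neg hq' hp₀ (hacc ▸ hp')
      neg_one_lt_zero
    simpa only [hq₀] using exists_pos_forall_of_eventually_nhdsNE hmax
  · have hacc : u (q t₀) (p t₀) t₀ * sin (q t₀) - cos (q t₀) = 1 := by simp [hq₀]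
    refine ⟨hacc, ?_⟩
    have hmin := eventually_nhdsNE_lt_of_hasDerivAt_of_hasDerivAt_neg
      (q := fun t => -q t) (hq'.mono fun t ht => ht.neg) (neg_eq_zero.mpr hp₀) (hacc ▸ hp').neg neg_one_lt_zero
    simpa only [hq₀, neg_lt_neg_iff, gt_iff_lt] using exists_pos_forall_of_eventually_nhdsNE hmin

/-- External tangency for the controlled pendulum `q̇ = p, ṗ = u(q,p,t)·sin q − cos q`:
along any solution defined near `t₀`, if `q(t₀) = 0, p(t₀) = 0` then `q̈(t₀) = −1` and
`q(t) < 0` on a punctured neighborhood of `t₀`; if `q(t₀) = π, p(t₀) = 0` then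
`q̈(t₀) = 1` and `q(t) > π` on a punctured neighborhood of `t₀`. -/
theorem inverted_pendulum_external_tangency
    (u : ℝ → ℝ → ℝ → ℝ)
    (hu_cont : Continuous fun x : ℝ × ℝ × ℝ => u x.1 x.2.1 x.2.2)
    (hu_lip : ∀ K : Set (ℝ × ℝ × ℝ), IsCompact K → ∃ L : ℝ,
      ∀ a ∈ K, ∀ b ∈ K, a.2.2 = b.2.2 →
        |u a.1 a.2.1 a.2.2 - u b.1 b.2.1 b.2.2| ≤
          L * dist ((a.1, a.2.1) : ℝ × ℝ) ((b.1, b.2.1) : ℝ × ℝ))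
    (t₀ ε : ℝ) (hε : 0 < ε) (q p : ℝ → ℝ)
    (hq : ∀ t ∈ Ioo (t₀ - ε) (t₀ + ε), HasDerivAt q (p t) t)
    (hp : ∀ t ∈ Ioo (t₀ - ε) (t₀ + ε), HasDerivAt p
      (u (q t) (p t) t * sin (q t) - cos (q t)) t) :
    (q t₀ = 0 ∧ p t₀ = 0 →
      u (q t₀) (p t₀) t₀ * sin (q t₀) - cos (q t₀) = -1 ∧
      ∃ δ > 0, ∀ t : ℝ, 0 < |t - t₀| → |t - t₀| ≤ δ → q t < 0) ∧
    (q t₀ = π ∧ p t₀ = 0 →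
      u (q t₀) (p t₀) t₀ * sin (q t₀) - cos (q t₀) = 1 ∧
      ∃ δ > 0, ∀ t : ℝ, 0 < |t - t₀| → |t - t₀| ≤ δ → q t > π) :=
  inverted_pendulum_external_tangency_general u t₀ ε hε q p hq hp
end

section
/- Consider the controlled inverted spherical pendulum with control functions u, v : ℝ⁵ → ℝ continuous in all variables and locally Lipschitz in the state variables, and let (φ(t), θ(t)) be a solution defined on a neighborhood of t₀. If φ(t₀) = 0 and φ̇(t₀) = 0, then φ̈(t₀) = −1; consequently there exists δ > 0 such that φ(t) < 0 for all t with 0 < |t − t₀| ≤ δ, i.e. for any control functions the pendulum started at the horizontal plane with zero inclination velocity immediately moves into the region φ < 0. -/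
open Real Set

/-- External tangency for the controlled spherical pendulum: along any solution defined near
`t₀`, if `φ(t₀) = 0` and `φ̇(t₀) = 0`, then `φ̈(t₀) = −1`, and consequently `φ(t) < 0`
on a punctured neighborhood of `t₀` — for any control functions, the pendulum started at
the horizontal plane with zero inclination velocity immediately moves below it. -/
theorem spherical_pendulum_external_tangency
    (u v : ℝ → ℝ → ℝ → ℝ → ℝ → ℝ)
    (hu_cont : Continuous fun x : ℝ × ℝ × ℝ × ℝ × ℝ =>
      u x.1 x.2.1 x.2.2.1 x.2.2.2.1 x.2.2.2.2)
    (hv_cont : Continuous fun x : ℝ × ℝ × ℝ × ℝ × ℝ =>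
      v x.1 x.2.1 x.2.2.1 x.2.2.2.1 x.2.2.2.2)
    (hu_lip : ∀ K : Set (ℝ × ℝ × ℝ × ℝ × ℝ), IsCompact K → ∃ L : ℝ,
      ∀ a ∈ K, ∀ b ∈ K, a.2.2.2.2 = b.2.2.2.2 →
        |u a.1 a.2.1 a.2.2.1 a.2.2.2.1 a.2.2.2.2
          - u b.1 b.2.1 b.2.2.1 b.2.2.2.1 b.2.2.2.2| ≤
          L * dist ((a.1, a.2.1, a.2.2.1, a.2.2.2.1) : ℝ × ℝ × ℝ × ℝ)
                   ((b.1, b.2.1, b.2.2.1, b.2.2.2.1) : ℝ × ℝ × ℝ × ℝ))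
    (hv_lip : ∀ K : Set (ℝ × ℝ × ℝ × ℝ × ℝ), IsCompact K → ∃ L : ℝ,
      ∀ a ∈ K, ∀ b ∈ K, a.2.2.2.2 = b.2.2.2.2 →
        |v a.1 a.2.1 a.2.2.1 a.2.2.2.1 a.2.2.2.2
          - v b.1 b.2.1 b.2.2.1 b.2.2.2.1 b.2.2.2.2| ≤
          L * dist ((a.1, a.2.1, a.2.2.1, a.2.2.2.1) : ℝ × ℝ × ℝ × ℝ)
                   ((b.1, b.2.1, b.2.2.1, b.2.2.2.1) : ℝ × ℝ × ℝ × ℝ))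
    (t₀ ε : ℝ) (hε : 0 < ε)
    (φ dφ ddφ θ dθ ddθ : ℝ → ℝ)
    (hφ : ∀ t ∈ Ioo (t₀ - ε) (t₀ + ε), HasDerivAt φ (dφ t) t)
    (hdφ : ∀ t ∈ Ioo (t₀ - ε) (t₀ + ε), HasDerivAt dφ (ddφ t) t)
    (hθ : ∀ t ∈ Ioo (t₀ - ε) (t₀ + ε), HasDerivAt θ (dθ t) t)
    (hdθ : ∀ t ∈ Ioo (t₀ - ε) (t₀ + ε), HasDerivAt dθ (ddθ t) t)
    (heq1 : ∀ t ∈ Ioo (t₀ - ε) (t₀ + ε), ddφ t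
        + u (φ t) (dφ t) (θ t) (dθ t) t * sin (φ t) * cos (θ t)
        + v (φ t) (dφ t) (θ t) (dθ t) t * sin (φ t) * sin (θ t)
        + (dθ t) ^ 2 * cos (φ t) * sin (φ t) = -cos (φ t))
    (heq2 : ∀ t ∈ Ioo (t₀ - ε) (t₀ + ε), ddθ t * (cos (φ t)) ^ 2
        - dθ t * dφ t * sin (φ t) * cos (φ t)
        + u (φ t) (dφ t) (θ t) (dθ t) t * sin (θ t) * cos (φ t)
        - v (φ t) (dφ t) (θ t) (dθ t) t * cos (φ t) * cos (θ t) = 0)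
    (h0 : φ t₀ = 0) (h0' : dφ t₀ = 0) :
    ddφ t₀ = -1 ∧
    ∃ δ > 0, ∀ t : ℝ, 0 < |t - t₀| → |t - t₀| ≤ δ → φ t < 0 := by
  have ht₀ : t₀ ∈ Ioo (t₀ - ε) (t₀ + ε) := ⟨by linarith, by linarith⟩
  have hdd : ddφ t₀ = -1 := by
    have h1 := heq1 t₀ ht₀
    rw [h0, h0'] at h1
    simp at h1
    linarith
  refine ⟨hdd, ?_⟩
  have hder : HasDerivAt dφ (-1) t₀ := hdd ▸ hdφ t₀ ht₀
  have hslope := hasDerivAt_iff_tendsto_slope.mp hder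
  have hev : ∀ᶠ t in nhdsWithin t₀ {t₀}ᶜ, slope dφ t₀ t < -(1/2) :=
    hslope.eventually (Iio_mem_nhds (by norm_num))
  rw [eventually_nhdsWithin_iff, Metric.eventually_nhds_iff] at hev
  obtain ⟨r, hr, hev⟩ := hev
  set δ := min (r/2) (ε/2) with hδdef
  refine ⟨δ, by positivity, fun t ht1 ht2 => ?_⟩
  have htne : t ≠ t₀ := by
    intro h; rw [h] at ht1; simp at ht1
  have htr : |t - t₀| < r := lt_of_le_of_lt ht2 (lt_of_le_of_lt (min_le_left _ _) (by linarith))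
  have htε : |t - t₀| < ε := lt_of_le_of_lt ht2 (lt_of_le_of_lt (min_le_right _ _) (by linarith))
  have habs := abs_lt.mp htε
  have key : ∀ c, c ≠ t₀ → |c - t₀| < r → dφ c / (c - t₀) < -(1/2) := by
    intro c hc hcr
    have h := hev (y := c) (by rwa [Real.dist_eq]) hc
    rwa [slope_def_field, h0', sub_zero] at h
  have hmem : ∀ x, t₀ - ε < x → x < t₀ + ε → x ∈ Ioo (t₀ - ε) (t₀ + ε) := fun x h1 h2 => ⟨h1, h2⟩
  rcases lt_or_gt_of_ne htne with hlt | hgt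
  · -- t < t₀
    have hsub : ∀ x ∈ Icc t t₀, x ∈ Ioo (t₀ - ε) (t₀ + ε) := by
      intro x hx; exact ⟨by cases hx; linarith, by cases hx; linarith⟩
    have hcont : ContinuousOn φ (Icc t t₀) := fun x hx =>
      ((hφ x (hsub x hx)).continuousAt).continuousWithinAt
    have hdiff : ∀ x ∈ Ioo t t₀, HasDerivAt φ (dφ x) x := fun x hx =>
      hφ x (hsub x ⟨le_of_lt hx.1, le_of_lt hx.2⟩)
    obtain ⟨c, hc, hceq⟩ := exists_hasDerivAt_eq_slope φ dφ hlt hcont hdiff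
    have hcr : |c - t₀| < r := by
      rw [abs_lt]; constructor
      · have : -(t - t₀) ≤ |t - t₀| := neg_le_abs _
        cases hc; linarith
      · cases hc; linarith
    have hk := key c (ne_of_lt hc.2) hcr
    have hcpos : c - t₀ < 0 := by cases hc; linarith
    have hdφc : dφ c > -(1/2) * (c - t₀) := by
      rw [div_lt_iff_of_neg (by linarith)] at hk
      linarith
    have hdφcpos : 0 < dφ c := by nlinarith
    rw [h0] at hceq
    have : (0 - φ t) / (t₀ - t) > 0 := hceq ▸ hdφcpos
    have h2 : 0 - φ t > 0 := by
      by_contra h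
      push_neg at h
      have := div_nonpos_of_nonpos_of_nonneg h (by linarith : (0:ℝ) ≤ t₀ - t)
      linarith
    linarith
  · -- t₀ < t
    have hsub : ∀ x ∈ Icc t₀ t, x ∈ Ioo (t₀ - ε) (t₀ + ε) := by
      intro x hx
      have h1 : t - t₀ ≤ |t - t₀| := le_abs_self _
      exact ⟨by cases hx; linarith, by cases hx; linarith⟩
    have hcont : ContinuousOn φ (Icc t₀ t) := fun x hx =>
      ((hφ x (hsub x hx)).continuousAt).continuousWithinAt
    have hdiff : ∀ x ∈ Ioo t₀ t, HasDerivAt φ (dφ x) x := fun x hx =>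
      hφ x (hsub x ⟨le_of_lt hx.1, le_of_lt hx.2⟩)
    obtain ⟨c, hc, hceq⟩ := exists_hasDerivAt_eq_slope φ dφ hgt hcont hdiff
    have hcr : |c - t₀| < r := by
      rw [abs_lt]; constructor
      · cases hc; linarith
      · have : t - t₀ ≤ |t - t₀| := le_abs_self _
        cases hc; linarith
    have hk := key c (ne_of_gt hc.1) hcr
    have hcpos : 0 < c - t₀ := by cases hc; linarith
    have hdφc : dφ c < -(1/2) * (c - t₀) := by
      rw [div_lt_iff₀ hcpos] at hk
      linarith
    have hdφcneg : dφ c < 0 := by nlinarith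
    rw [h0] at hceq
    have hlt0 : (φ t - 0) / (t - t₀) < 0 := hceq ▸ hdφcneg
    have h2 : φ t - 0 < 0 := by
      by_contra h
      push_neg at h
      have := div_nonneg h (by linarith : (0:ℝ) ≤ t - t₀)
      linarith
    linarith
end

section
/- Consider the pendulum-on-a-cart system with cart mass m > 0 and control force u : ℝ⁵ → ℝ continuous in all variables and locally Lipschitz in the state variables, and let (q(t), p(t), x(t), y(t)) be a solution defined on a neighborhood of t₀. If q(t₀) = 0 and p(t₀) = 0, then ṗ(t₀) = −1 < 0, so there exists δ > 0 such that q(t) < 0 for all t with 0 < |t − t₀| ≤ δ; and if q(t₀) = π and p(t₀) = 0, then ṗ(t₀) = 1 > 0, so there exists δ > 0 such that q(t) > π for all t with 0 < |t − t₀| ≤ δ. -/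
open Real Set

/-- The `ṗ` component of the pendulum-on-a-cart vector field; state `z = (q, p, x, y)`. -/
noncomputable def cartPAcc (m : ℝ) (u : ℝ → ℝ → ℝ → ℝ → ℝ → ℝ)
    (z : ℝ × ℝ × ℝ × ℝ) (t : ℝ) : ℝ :=
  (u z.1 z.2.1 z.2.2.1 z.2.2.2 t * Real.sin z.1
    + z.2.1 ^ 2 * Real.sin z.1 * Real.cos z.1
    - (1 + m) * Real.cos z.1) / (m + (Real.cos z.1) ^ 2)

/-- The `ẏ` component of the pendulum-on-a-cart vector field; state `z = (q, p, x, y)`. -/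
noncomputable def cartYAcc (m : ℝ) (u : ℝ → ℝ → ℝ → ℝ → ℝ → ℝ)
    (z : ℝ × ℝ × ℝ × ℝ) (t : ℝ) : ℝ :=
  (u z.1 z.2.1 z.2.2.1 z.2.2.2 t
    + z.2.1 ^ 2 * Real.cos z.1
    - Real.sin z.1 * Real.cos z.1) / (m + (Real.cos z.1) ^ 2)

lemma aux_strict_max (t₀ ε : ℝ) (hε : 0 < ε) (q p : ℝ → ℝ)
    (hq : ∀ t ∈ Ioo (t₀ - ε) (t₀ + ε), HasDerivAt q (p t) t)
    (hp0 : p t₀ = 0)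
    (hd : HasDerivAt p (-1) t₀) :
    ∃ δ > 0, ∀ t : ℝ, 0 < |t - t₀| → |t - t₀| ≤ δ → q t < q t₀ := by
  have hslope : Filter.Tendsto (slope p t₀) (nhdsWithin t₀ {t₀}ᶜ) (nhds (-1)) :=
    hasDerivAt_iff_tendsto_slope.mp hd
  have hev : ∀ᶠ t in nhdsWithin t₀ {t₀}ᶜ, slope p t₀ t < 0 :=
    hslope.eventually_lt_const (by norm_num)
  rw [Filter.Eventually, Metric.mem_nhdsWithin_iff] at hev
  obtain ⟨δ₁, hδ₁, hball⟩ := hev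
  set δ : ℝ := min (δ₁ / 2) (ε / 2) with hδdef
  have hδpos : 0 < δ := lt_min (by linarith) (by linarith)
  refine ⟨δ, hδpos, ?_⟩
  have hsign : ∀ t : ℝ, 0 < |t - t₀| → |t - t₀| ≤ δ → p t / (t - t₀) < 0 := by
    intro t ht hle
    have hne : t ≠ t₀ := by
      intro h; rw [h] at ht; simp at ht
    have hd1 : dist t t₀ < δ₁ := by
      have : |t - t₀| < δ₁ := lt_of_le_of_lt hle (lt_of_le_of_lt (min_le_left _ _) (by linarith))
      simpa [Real.dist_eq] using this
    have := hball ⟨by simpa [Metric.mem_ball] using hd1, hne⟩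
    simpa [slope_def_field, div_eq_div_iff, hp0] using this
  have hmem : ∀ t : ℝ, |t - t₀| ≤ δ → t ∈ Ioo (t₀ - ε) (t₀ + ε) := by
    intro t ht
    have h2 : |t - t₀| ≤ ε / 2 := le_trans ht (min_le_right _ _)
    rw [abs_le] at h2
    constructor <;> [linarith; linarith]
  intro t ht hle
  rcases lt_or_gt_of_ne (fun h : t = t₀ => by rw [h] at ht; simp at ht) with hlt | hgt
  · -- t < t₀ : q strictly mono on [t₀ - δ, t₀]; p positive on interior... need p t > 0 on (t, t₀)?
    -- use StrictMonoOn on Icc t t₀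
    have hseg : Icc t t₀ ⊆ Ioo (t₀ - ε) (t₀ + ε) := by
      intro s hs
      apply hmem
      rw [abs_le] at hle ⊢
      constructor <;> [linarith [hs.1, hle.1]; linarith [hs.2]]
    have hmono : StrictMonoOn q (Icc t t₀) := by
      apply StrictMonoOn.mono (s := Icc t t₀) ?_ (subset_refl _)
      apply strictMonoOn_of_deriv_pos (convex_Icc t t₀)
      · exact fun s hs => ((hq s (hseg hs)).continuousAt).continuousWithinAt
      · intro s hs
        rw [interior_Icc] at hs
        rw [(hq s (hseg (Ioo_subset_Icc_self hs))).deriv]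
        have habs : 0 < |s - t₀| := by
          rw [abs_pos]; exact sub_ne_zero.mpr (ne_of_lt hs.2)
        have habs2 : |s - t₀| ≤ δ := by
          rw [abs_le] at hle ⊢
          constructor <;> [linarith [hs.1, hle.1]; linarith [hs.2]]
        have := hsign s habs habs2
        have hneg : s - t₀ < 0 := sub_neg.mpr hs.2
        rcases div_neg_iff.mp this with ⟨h1, _⟩ | ⟨_, h2⟩
        · exact h1
        · linarith
    exact hmono (left_mem_Icc.mpr (le_of_lt hlt)) (right_mem_Icc.mpr (le_of_lt hlt)) hlt
  · have hseg : Icc t₀ t ⊆ Ioo (t₀ - ε) (t₀ + ε) := by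
      intro s hs
      apply hmem
      rw [abs_le] at hle ⊢
      constructor <;> [linarith [hs.1]; linarith [hs.2, hle.2]]
    have hanti : StrictAntiOn q (Icc t₀ t) := by
      apply strictAntiOn_of_deriv_neg (convex_Icc t₀ t)
      · exact fun s hs => ((hq s (hseg hs)).continuousAt).continuousWithinAt
      · intro s hs
        rw [interior_Icc] at hs
        rw [(hq s (hseg (Ioo_subset_Icc_self hs))).deriv]
        have habs : 0 < |s - t₀| := by
          rw [abs_pos]; exact sub_ne_zero.mpr (ne_of_gt hs.1)
        have habs2 : |s - t₀| ≤ δ := by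
          rw [abs_le] at hle ⊢
          constructor <;> [linarith [hs.1]; linarith [hs.2, hle.2]]
        have := hsign s habs habs2
        have hpos : 0 < s - t₀ := sub_pos.mpr hs.1
        rcases div_neg_iff.mp this with ⟨_, h2⟩ | ⟨h1, _⟩
        · linarith
        · exact h1
    exact hanti (left_mem_Icc.mpr (le_of_lt hgt)) (right_mem_Icc.mpr (le_of_lt hgt)) hgt

/-- External tangency for the pendulum on a cart: along any solution defined near `t₀`, if
`q(t₀) = 0` and `p(t₀) = 0` then `ṗ(t₀) = −1 < 0` and `q(t) < 0` on a punctured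
neighborhood of `t₀`; if `q(t₀) = π` and `p(t₀) = 0` then `ṗ(t₀) = 1 > 0` and `q(t) > π`
on a punctured neighborhood of `t₀`. -/
theorem cart_pendulum_external_tangency
    (m : ℝ) (hm : 0 < m)
    (u : ℝ → ℝ → ℝ → ℝ → ℝ → ℝ)
    (hu_cont : Continuous fun x : ℝ × ℝ × ℝ × ℝ × ℝ =>
      u x.1 x.2.1 x.2.2.1 x.2.2.2.1 x.2.2.2.2)
    (hu_lip : ∀ K : Set (ℝ × ℝ × ℝ × ℝ × ℝ), IsCompact K → ∃ L : ℝ,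
      ∀ a ∈ K, ∀ b ∈ K, a.2.2.2.2 = b.2.2.2.2 →
        |u a.1 a.2.1 a.2.2.1 a.2.2.2.1 a.2.2.2.2
          - u b.1 b.2.1 b.2.2.1 b.2.2.2.1 b.2.2.2.2| ≤
          L * dist ((a.1, a.2.1, a.2.2.1, a.2.2.2.1) : ℝ × ℝ × ℝ × ℝ)
                   ((b.1, b.2.1, b.2.2.1, b.2.2.2.1) : ℝ × ℝ × ℝ × ℝ))
    (t₀ ε : ℝ) (hε : 0 < ε)
    (q p x y : ℝ → ℝ)
    (hq : ∀ t ∈ Ioo (t₀ - ε) (t₀ + ε), HasDerivAt q (p t) t)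
    (hp : ∀ t ∈ Ioo (t₀ - ε) (t₀ + ε),
      HasDerivAt p (cartPAcc m u (q t, p t, x t, y t) t) t)
    (hx : ∀ t ∈ Ioo (t₀ - ε) (t₀ + ε), HasDerivAt x (y t) t)
    (hy : ∀ t ∈ Ioo (t₀ - ε) (t₀ + ε),
      HasDerivAt y (cartYAcc m u (q t, p t, x t, y t) t) t) :
    (q t₀ = 0 ∧ p t₀ = 0 →
      cartPAcc m u (q t₀, p t₀, x t₀, y t₀) t₀ = -1 ∧
      ∃ δ > 0, ∀ t : ℝ, 0 < |t - t₀| → |t - t₀| ≤ δ → q t < 0) ∧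
    (q t₀ = π ∧ p t₀ = 0 →
      cartPAcc m u (q t₀, p t₀, x t₀, y t₀) t₀ = 1 ∧
      ∃ δ > 0, ∀ t : ℝ, 0 < |t - t₀| → |t - t₀| ≤ δ → q t > π) := by
  have ht₀ : t₀ ∈ Ioo (t₀ - ε) (t₀ + ε) := by constructor <;> linarith
  have hm1 : m + 1 ≠ 0 := by linarith
  constructor
  · rintro ⟨hq0, hp0⟩
    have hval : cartPAcc m u (q t₀, p t₀, x t₀, y t₀) t₀ = -1 := by
      simp only [cartPAcc, hq0, hp0, Real.sin_zero, Real.cos_zero]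
      field_simp
      ring
    refine ⟨hval, ?_⟩
    have hd : HasDerivAt p (-1) t₀ := hval ▸ hp t₀ ht₀
    obtain ⟨δ, hδ, h⟩ := aux_strict_max t₀ ε hε q p hq hp0 hd
    exact ⟨δ, hδ, fun t h1 h2 => hq0 ▸ h t h1 h2⟩
  · rintro ⟨hq0, hp0⟩
    have hval : cartPAcc m u (q t₀, p t₀, x t₀, y t₀) t₀ = 1 := by
      simp only [cartPAcc, hq0, hp0, Real.sin_pi, Real.cos_pi]
      rw [div_eq_one_iff_eq (by norm_num; linarith)]
      ring
    refine ⟨hval, ?_⟩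
    have hd : HasDerivAt (fun s => -p s) (-1) t₀ := by
      have h2 := (hp t₀ ht₀).neg
      rw [hval] at h2
      exact h2
    obtain ⟨δ, hδ, h⟩ := aux_strict_max t₀ ε hε (fun s => -q s) (fun s => -p s)
      (fun s hs => (hq s hs).neg) (by simp [hp0]) hd
    refine ⟨δ, hδ, fun t h1 h2 => ?_⟩
    have h3 := h t h1 h2
    simp only [hq0] at h3
    linarith
end
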